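/- For the Fibonacci substitution φ : a ↦ ab, b ↦ a with fixed point u starting at a, the Dumont–Thomas representation of n ≥ 1 (the word |m_{k-1}|···|m_0| from the unique a-admissible decomposition of the prefix of length n of u with m_{k-1} ≠ ε) is exactly the Zeckendorf representation of n: a word over {0,1} starting with 1, containing no factor 11, with value Σ_i w_i F_{i+2} = n where F_2 = 1, F_3 = 2, F_4 = 3, ... are Fibonacci numbers. -/
import Mathlib


/-- `substApp μ n w` is `μ^n(w)`: the `n`-fold application of the substitution `μ`
(extended to words by concatenation) to the word `w`. -/
def substApp {A : Type*} (μ : A → List A) (n : ℕ) (w : List A) : List A :=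
  (fun v => v.flatMap μ)^[n] w

/-- A sequence `((m_i, a_i))_{i=0,...,k-1}` is admissible with respect to `μ` if
`m_{i-1} a_{i-1}` is a prefix of `μ(a_i)` for every `1 ≤ i ≤ k-1`. -/
def Admissible {A : Type*} (μ : A → List A) (k : ℕ) (s : Fin k → List A × A) : Prop :=
  ∀ i : Fin k, 0 < i.val →
    ((s ⟨i.val - 1, by have := i.isLt; omega⟩).1 ++
      [(s ⟨i.val - 1, by have := i.isLt; omega⟩).2]) <+: μ (s i).2

/-- A sequence `((m_i, a_i))_{i=0,...,k-1}` is `a`-admissible with respect to `μ`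
if it is admissible and moreover `m_{k-1} a_{k-1}` is a prefix of `μ(a)`. -/
def LetterAdmissible {A : Type*} (μ : A → List A) (a : A) (k : ℕ)
    (s : Fin k → List A × A) : Prop :=
  Admissible μ k s ∧ ∀ h : 0 < k,
    ((s ⟨k - 1, by omega⟩).1 ++ [(s ⟨k - 1, by omega⟩).2]) <+: μ a

/-- The word `μ^{k-1}(m_{k-1}) · μ^{k-2}(m_{k-2}) ⋯ μ^0(m_0)` associated with a
sequence `((m_i, a_i))_{i=0,...,k-1}`. -/
def dtProd {A : Type*} (μ : A → List A) (k : ℕ) (s : Fin k → List A × A) : List A :=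
  ((List.ofFn fun i : Fin k => substApp μ i.val (s i).1)).reverse.flatten

/-- The Fibonacci substitution `φ : a ↦ ab, b ↦ a` on `{a,b} = Fin 2`. -/
def fibSub : Fin 2 → List (Fin 2) := ![[0, 1], [0]]

lemma substApp_succ {A : Type*} (μ : A → List A) (n : ℕ) (w : List A) :
    substApp μ (n+1) w = substApp μ n (w.flatMap μ) := by
  simp [substApp, Function.iterate_succ_apply]

lemma substApp_append {A : Type*} (μ : A → List A) (n : ℕ) (xs ys : List A) :
    substApp μ n (xs ++ ys) = substApp μ n xs ++ substApp μ n ys := by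
  induction n generalizing xs ys with
  | zero => simp [substApp]
  | succ n ih => simp [substApp_succ, List.flatMap_append, ih]

lemma substApp_nil {A : Type*} (μ : A → List A) (n : ℕ) :
    substApp μ n [] = [] := by
  induction n with
  | zero => simp [substApp]
  | succ n ih => simp [substApp_succ, ih]

lemma len_fib : ∀ n : ℕ, (substApp fibSub n [0]).length = Nat.fib (n+2) ∧
    (substApp fibSub n [1]).length = Nat.fib (n+1) := by
  intro n
  induction n with
  | zero => simp [substApp]
  | succ n ih =>
    have h0 : substApp fibSub (n+1) [0] = substApp fibSub n [0] ++ substApp fibSub n [1] := by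
      rw [substApp_succ]
      show substApp fibSub n ([0] ++ [1]) = _
      rw [substApp_append]
    have h1 : substApp fibSub (n+1) [1] = substApp fibSub n [0] := by
      rw [substApp_succ]; rfl
    constructor
    · rw [h0, List.length_append, ih.1, ih.2]
      show Nat.fib (n+2) + Nat.fib (n+1) = Nat.fib (n+3)
      have h2 : Nat.fib (n+3) = Nat.fib (n+1) + Nat.fib (n+2) := Nat.fib_add_two
      omega
    · rw [h1, ih.1]

lemma prefix_class (m : List (Fin 2)) (a c : Fin 2) (h : m ++ [a] <+: fibSub c) :
    (m = [] ∧ a = 0) ∨ (m = [0] ∧ a = 1 ∧ c = 0) := by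
  match m with
  | [] => fin_cases a <;> fin_cases c <;> revert h <;> decide
  | [x] => fin_cases x <;> fin_cases a <;> fin_cases c <;> revert h <;> decide
  | x :: y :: t =>
    have := h.length_le
    fin_cases c <;> simp [fibSub] at this

/-- For the Fibonacci substitution `φ : a ↦ ab, b ↦ a` with fixed point `u`
(encoded by `hu`: the prefix of `u` of length `|φ^n(a)|` is `φ^n(a)` for all `n`),
the Dumont–Thomas representation of `n ≥ 1`, i.e. the digit word
`|m_{k-1}| ⋯ |m_0|` of the unique `a`-admissible decomposition of the prefix of
length `n` of `u` with `m_{k-1} ≠ ε`, is the Zeckendorf representation of `n`: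
its digits are in `{0,1}`, it starts with `1`, it has no factor `11`, and
`n = ∑ i w_i · F_{i+2}` for the Fibonacci numbers `F` (`Nat.fib`). -/
theorem stmt16 (u : ℕ → Fin 2)
    (hu : ∀ n : ℕ,
        List.ofFn (fun i : Fin (substApp fibSub n [0]).length => u i.val)
          = substApp fibSub n [0])
    (n : ℕ) (hn : 1 ≤ n) (k : ℕ) (s : Fin k → List (Fin 2) × Fin 2)
    (hadm : LetterAdmissible fibSub 0 k s)
    (htop : ∀ h : 0 < k, (s ⟨k - 1, by omega⟩).1 ≠ [])
    (hdec : List.ofFn (fun i : Fin n => u i.val) = dtProd fibSub k s) :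
    (∀ i : Fin k, (s i).1.length ≤ 1) ∧
    (∀ h : 0 < k, (s ⟨k - 1, by omega⟩).1.length = 1) ∧
    (∀ i : Fin k, ∀ hi : i.val + 1 < k,
        ¬((s i).1.length = 1 ∧ (s ⟨i.val + 1, hi⟩).1.length = 1)) ∧
    n = ∑ i : Fin k, (s i).1.length * Nat.fib (i.val + 2) := by
  obtain ⟨hA, hL⟩ := hadm
  have hclass : ∀ i : Fin k, (s i).1 = [] ∨ ((s i).1 = [0] ∧ (s i).2 = 1) := by
    intro i
    by_cases hi : i.val + 1 < k
    · have h := hA ⟨i.val + 1, hi⟩ (by simp)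
      have he : (⟨i.val + 1 - 1, by omega⟩ : Fin k) = i := Fin.ext (by simp)
      rw [he] at h
      rcases prefix_class _ _ _ h with ⟨h1, _⟩ | ⟨h1, h2, _⟩
      · exact Or.inl h1
      · exact Or.inr ⟨h1, h2⟩
    · have hk : 0 < k := i.pos
      have h := hL hk
      have he : (⟨k - 1, by omega⟩ : Fin k) = i := Fin.ext (by show k - 1 = i.val; have := i.isLt; omega)
      rw [he] at h
      rcases prefix_class _ _ _ h with ⟨h1, _⟩ | ⟨h1, h2, _⟩
      · exact Or.inl h1
      · exact Or.inr ⟨h1, h2⟩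
  refine ⟨?_, ?_, ?_, ?_⟩
  · intro i
    rcases hclass i with h | ⟨h, _⟩ <;> simp [h]
  · intro hk
    rcases hclass ⟨k - 1, by omega⟩ with h | ⟨h, _⟩
    · exact absurd h (htop hk)
    · simp [h]
  · rintro i hi ⟨l1, l2⟩
    rcases hclass i with h | ⟨h, _⟩
    · simp [h] at l1
    rcases hclass ⟨i.val + 1, hi⟩ with h' | ⟨h', ha'⟩
    · simp [h'] at l2
    have hp := hA ⟨i.val + 1, hi⟩ (by simp)
    have he : (⟨i.val + 1 - 1, by omega⟩ : Fin k) = i := Fin.ext (by simp)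
    rw [he, ha'] at hp
    have := hp.length_le
    simp [h, fibSub] at this
  · have hlen := congrArg List.length hdec
    simp only [List.length_ofFn] at hlen
    rw [hlen, dtProd]
    rw [List.length_flatten]
    rw [List.map_reverse, List.sum_reverse, List.map_ofFn, List.sum_ofFn]
    apply Finset.sum_congr rfl
    intro i _
    rcases hclass i with h | ⟨h, _⟩
    · simp [h, substApp_nil]
    · simp only [Function.comp, h]
      rw [(len_fib i.val).1]
      simp [h]
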